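/- If M is a finitely generated Gorenstein projective module over an Artinian algebra with a minimal projective resolution, then the Auslander transpose Tr M is isomorphic to (Ω² M)* = Hom_Λ(Ω² M, Λ). -/

import Mathlib

open CategoryTheory

noncomputable section

/-- The Ext group `Ext^i_R(M,N)` (ℤ-linear Ext in `ModuleCat R`). -/
def ExtGrp (R : Type) [Ring R] (M N : Type) [AddCommGroup M] [Module R M]
    [AddCommGroup N] [Module R N] (i : ℕ) : Type :=
  ((Ext ℤ (ModuleCat R) i).obj (Opposite.op (ModuleCat.of R M))).obj (ModuleCat.of R N)

instance (R : Type) [Ring R] (M N : Type) [AddCommGroup M] [Module R M]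
    [AddCommGroup N] [Module R N] (i : ℕ) : AddCommGroup (ExtGrp R M N i) :=
  inferInstanceAs (AddCommGroup (((Ext ℤ (ModuleCat R) i).obj
    (Opposite.op (ModuleCat.of R M))).obj (ModuleCat.of R N)))

/-- `Ext^i_R(M,N)` vanishes. -/
def extVanish (R : Type) [Ring R] (M N : Type) [AddCommGroup M] [Module R M]
    [AddCommGroup N] [Module R N] (i : ℕ) : Prop :=
  Subsingleton (ExtGrp R M N i)

/-- `M` is self-orthogonal: `Ext^i(M,M) = 0` for all `i ≥ 1`. -/
def SelfOrth (R : Type) [Ring R] (M : Type) [AddCommGroup M] [Module R M] : Prop :=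
  ∀ i : ℕ, 1 ≤ i → extVanish R M M i

/-- `f : P → M` is a projective cover: `P` projective, `f` surjective with superfluous kernel. -/
def IsProjCover (R : Type) [Ring R] {P M : Type} [AddCommGroup P] [Module R P]
    [AddCommGroup M] [Module R M] (f : P →ₗ[R] M) : Prop :=
  Module.Projective R P ∧ Function.Surjective f ∧
    ∀ N : Submodule R P, N ⊔ LinearMap.ker f = ⊤ → N = ⊤

/-- `K` is (isomorphic to) the first syzygy `Ω M` of a minimal projective resolution of `M`. -/
def IsSyzygyOf (R : Type) [Ring R] (K M : Type) [AddCommGroup K] [Module R K]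
    [AddCommGroup M] [Module R M] : Prop :=
  ∃ (P : Type) (_ : AddCommGroup P) (_ : Module R P) (f : P →ₗ[R] M),
    IsProjCover R f ∧ Nonempty (K ≃ₗ[R] LinearMap.ker f)

/-- `K` is (isomorphic to) the `n`-th syzygy `Ω^n M` of a minimal projective resolution. -/
def IsNthSyzygyOf (R : Type) [Ring R] : ℕ → (K M : Type) → [AddCommGroup K] → [Module R K] →
    [AddCommGroup M] → [Module R M] → Prop
  | 0, K, M, _, _, _, _ => Nonempty (K ≃ₗ[R] M)
  | n + 1, K, M, _, _, _, _ =>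
      ∃ (K' : Type) (_ : AddCommGroup K') (_ : Module R K'), IsSyzygyOf R K' M ∧
        IsNthSyzygyOf R n K K'

/-- The map on duals `Hom(N,R) → Hom(M,R)` (a map of right `R`-modules) induced by `f`. -/
def dualMapOp (R : Type) [Ring R] {M N : Type} [AddCommGroup M] [Module R M]
    [AddCommGroup N] [Module R N] (f : M →ₗ[R] N) :
    (N →ₗ[R] R) →ₗ[Rᵐᵒᵖ] (M →ₗ[R] R) where
  toFun g := g.comp f
  map_add' g h := by ext; simp
  map_smul' a g := by ext; simp

/-- `T` is (isomorphic to) the Auslander transpose of `M`, i.e. the cokernel of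
`Hom(P₀,R) → Hom(P₁,R)` for a minimal projective presentation `P₁ → P₀ → M → 0`. -/
def IsTransposeOf (R : Type) [Ring R] (T M : Type) [AddCommGroup T] [Module Rᵐᵒᵖ T]
    [AddCommGroup M] [Module R M] : Prop :=
  ∃ (P₁ P₀ : Type) (_ : AddCommGroup P₁) (_ : Module R P₁) (_ : AddCommGroup P₀)
    (_ : Module R P₀) (g : P₁ →ₗ[R] P₀) (f : P₀ →ₗ[R] M),
      IsProjCover R f ∧ Module.Projective R P₁ ∧
      LinearMap.range g = LinearMap.ker f ∧
      (∀ N : Submodule R P₁, N ⊔ LinearMap.ker g = ⊤ → N = ⊤) ∧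
      Nonempty (T ≃ₗ[Rᵐᵒᵖ] ((P₁ →ₗ[R] R) ⧸ LinearMap.range (dualMapOp R g)))

/-- `M` is Gorenstein projective: `Ext^i(M,R) = 0` and `Ext^i(Tr M, R) = 0` for all `i ≥ 1`. -/
def GProj (R : Type) [Ring R] (M : Type) [AddCommGroup M] [Module R M] : Prop :=
  (∀ i : ℕ, 1 ≤ i → extVanish R M R i) ∧
  (∀ (T : Type) (_ : AddCommGroup T) (_ : Module Rᵐᵒᵖ T), IsTransposeOf R T M →
    ∀ i : ℕ, 1 ≤ i → extVanish Rᵐᵒᵖ T Rᵐᵒᵖ i)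

/-- `f` factors through a projective module. -/
def FactorsThroughProj (R : Type) [Ring R] {M N : Type} [AddCommGroup M] [Module R M]
    [AddCommGroup N] [Module R N] (f : M →ₗ[R] N) : Prop :=
  ∃ (P : Type) (_ : AddCommGroup P) (_ : Module R P) (_ : Module.Projective R P)
    (g : M →ₗ[R] P) (h : P →ₗ[R] N), f = h.comp g

/-- The subgroup of `Hom(M,N)` of morphisms factoring through a projective. -/
def projFactorSub (R : Type) [Ring R] (M N : Type) [AddCommGroup M] [Module R M]
    [AddCommGroup N] [Module R N] : AddSubgroup (M →ₗ[R] N) :=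
  AddSubgroup.closure {f | FactorsThroughProj R f}

/-- The stable Hom group `Hom̲(M,N) = Hom(M,N)` modulo maps factoring through projectives. -/
def StableHom (R : Type) [Ring R] (M N : Type) [AddCommGroup M] [Module R M]
    [AddCommGroup N] [Module R N] :=
  (M →ₗ[R] N) ⧸ projFactorSub R M N

instance (R : Type) [Ring R] (M N : Type) [AddCommGroup M] [Module R M]
    [AddCommGroup N] [Module R N] : AddCommGroup (StableHom R M N) :=
  QuotientAddGroup.Quotient.addCommGroup _

/-- `M` and `N` are isomorphic in the stable category: `M ⊕ P ≅ N ⊕ Q` with `P,Q` projective. -/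
def StablyIso (R : Type) [Ring R] (M N : Type) [AddCommGroup M] [Module R M]
    [AddCommGroup N] [Module R N] : Prop :=
  ∃ (P Q : Type) (_ : AddCommGroup P) (_ : Module R P) (_ : AddCommGroup Q) (_ : Module R Q),
    Module.Projective R P ∧ Module.Projective R Q ∧ Nonempty ((M × P) ≃ₗ[R] (N × Q))

/-- `M` is an indecomposable (nonzero) module. -/
def Indec (R : Type) [Ring R] (M : Type) [AddCommGroup M] [Module R M] : Prop :=
  Nontrivial M ∧ ∀ N₁ N₂ : Submodule R M, IsCompl N₁ N₂ → N₁ = ⊥ ∨ N₂ = ⊥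

/-- `R` is CM-finite: finitely many iso classes of f.g. indecomposable Gorenstein projectives. -/
def CMFinite (R : Type) [Ring R] : Prop :=
  ∃ L : List (ModuleCat.{0} R), ∀ (M : Type) (_ : AddCommGroup M) (_ : Module R M),
    Module.Finite R M → Indec R M → GProj R M → ∃ N ∈ L, Nonempty (M ≃ₗ[R] N)

/-- `R` satisfies the Gorenstein projective conjecture. -/
def GPConj (R : Type) [Ring R] : Prop :=
  ∀ (M : Type) (_ : AddCommGroup M) (_ : Module R M), Module.Finite R M →
    GProj R M → SelfOrth R M → Module.Projective R M

section GPauxSec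
open Limits
namespace GPaux

variable {C : Type*} [Category C] [Abelian C] [EnoughProjectives C]
variable (P₀ P₁ : C) (g : P₁ ⟶ P₀)

/-- complex with prescribed degrees 0 and 1 -/
def ofComplex2 : ChainComplex C ℕ :=
  ChainComplex.mk' P₀ P₁ g fun f => ⟨_, Projective.d f, by exact (Category.assoc _ _ _).trans (by rw [kernel.condition]; exact comp_zero)⟩

lemma ofComplex2_d_1_0 : (ofComplex2 P₀ P₁ g).d 1 0 = g := by
  simp [ofComplex2]

/-- auxiliary iso -/
def ofComplex2XIso (n : ℕ) :
    (ofComplex2 P₀ P₁ g).X (n + 2) ≅ Projective.syzygies ((ofComplex2 P₀ P₁ g).d (n + 1) n) :=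
  ChainComplex.mk'XIso _ _ _ _ n

lemma ofComplex2_d (n : ℕ) : (ofComplex2 P₀ P₁ g).d (n + 2) (n + 1) =
    (ofComplex2XIso P₀ P₁ g n).hom ≫ Projective.d ((ofComplex2 P₀ P₁ g).d (n + 1) n) :=
  ChainComplex.mk'_d _ _ _ _ n

lemma ofComplex2_exactAt_succ (n : ℕ) :
    (ofComplex2 P₀ P₁ g).ExactAt (n + 1) := by
  rw [HomologicalComplex.exactAt_iff' _ (n + 1 + 1) (n + 1) n (by simp) (by simp)]
  have h := exact_d_f ((ofComplex2 P₀ P₁ g).d (n + 1) n)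
  refine (ShortComplex.exact_iff_of_iso ?_).2 h
  exact ShortComplex.isoMk (ofComplex2XIso P₀ P₁ g n) (Iso.refl _) (Iso.refl _)
    ((ofComplex2_d P₀ P₁ g n).symm.trans (Category.comp_id _).symm)
    ((Category.id_comp _).trans (Category.comp_id _).symm)

instance proj2 [Projective P₀] [Projective P₁] (n : ℕ) :
    Projective ((ofComplex2 P₀ P₁ g).X n) := by
  obtain (_ | _ | _ | n) := n
  · exact (inferInstance : Projective P₀)
  · exact (inferInstance : Projective P₁)
  · apply Projective.projective_over
  · apply Projective.projective_over

/-- ProjectiveResolution with prescribed first two steps. -/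
def resolution2 [Projective P₀] [Projective P₁] (M : C) (p : P₀ ⟶ M) [Epi p]
    (hgp : g ≫ p = 0) (hex : (ShortComplex.mk g p hgp).Exact) :
    ProjectiveResolution M where
  complex := ofComplex2 P₀ P₁ g
  π := (ChainComplex.toSingle₀Equiv _ _).symm ⟨p, by
        rw [ofComplex2_d_1_0]; exact hgp⟩
  quasiIso := ⟨fun n => by
    cases n with
    | zero =>
      rw [ChainComplex.quasiIsoAt₀_iff, ShortComplex.quasiIso_iff_of_zeros']
      · refine (ShortComplex.exact_and_epi_g_iff_of_iso ?_).2 ⟨hex, inferInstance⟩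
        exact ShortComplex.isoMk (Iso.refl _) (Iso.refl _) (Iso.refl _)
          (by exact (Category.id_comp _).trans ((Category.comp_id _).trans (ofComplex2_d_1_0 P₀ P₁ g)).symm) (by exact (Category.id_comp _).trans ((Category.comp_id _).trans (ChainComplex.toSingle₀Equiv_symm_apply_f_zero (C := ofComplex2 P₀ P₁ g) (X := M) p _)).symm)
      all_goals rfl
    | succ n =>
      rw [quasiIsoAt_iff_exactAt']
      · apply ofComplex2_exactAt_succ
      · apply ChainComplex.exactAt_succ_single_obj⟩

end GPaux

lemma res_exact (Λ : Type) [Ring Λ] (M : Type) [AddCommGroup M] [Module Λ M]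
    (Q : ProjectiveResolution (ModuleCat.of Λ M)) (n : ℕ)
    (hvan : Subsingleton (ExtGrp Λ M Λ (n + 1)))
    (ψ : Q.complex.X (n + 1) ⟶ ModuleCat.of Λ Λ)
    (hψ : Q.complex.d (n + 2) (n + 1) ≫ ψ = 0) :
    ∃ η : Q.complex.X n ⟶ ModuleCat.of Λ Λ, Q.complex.d (n + 1) n ≫ η = ψ := by
  have hsub :
      Subsingleton ((Q.complex.linearYonedaObj ℤ (ModuleCat.of Λ Λ)).homology (n + 1)) := by
    have e := Q.isoExt (R := ℤ) (n + 1) (ModuleCat.of Λ Λ)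
    have hv : Subsingleton (((Ext ℤ (ModuleCat Λ) (n + 1)).obj
        (Opposite.op (ModuleCat.of Λ M))).obj (ModuleCat.of Λ Λ)) := hvan
    constructor
    intro a b
    have h : e.inv a = e.inv b := Subsingleton.elim _ _
    calc a = e.hom (e.inv a) := (e.inv_hom_id_apply a).symm
    _ = e.hom (e.inv b) := by rw [h]
    _ = b := e.inv_hom_id_apply b
  have hz : Limits.IsZero
      ((Q.complex.linearYonedaObj ℤ (ModuleCat.of Λ Λ)).homology (n + 1)) :=
    ModuleCat.isZero_of_subsingleton _
  have hex : (Q.complex.linearYonedaObj ℤ (ModuleCat.of Λ Λ)).ExactAt (n + 1) :=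
    (HomologicalComplex.exactAt_iff_isZero_homology _ _).2 hz
  rw [HomologicalComplex.exactAt_iff' _ n (n + 1) (n + 2) (by simp) (by simp)] at hex
  rw [ShortComplex.moduleCat_exact_iff] at hex
  obtain ⟨η, hη⟩ := hex ψ (show Q.complex.d (n + 2) (n + 1) ≫ ψ = 0 from hψ)
  exact ⟨η, show (HomologicalComplex.sc'
    (Q.complex.linearYonedaObj ℤ (ModuleCat.of Λ Λ)) n (n + 1) (n + 2)).f η = ψ from hη⟩

lemma extend_ker (Λ : Type) [Ring Λ] (M P₀ P₁ : Type) [AddCommGroup M] [Module Λ M]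
    [AddCommGroup P₀] [Module Λ P₀] [AddCommGroup P₁] [Module Λ P₁]
    (hP₀ : Module.Projective Λ P₀) (hP₁ : Module.Projective Λ P₁)
    (p : P₀ →ₗ[Λ] M) (hp : Function.Surjective p)
    (g : P₁ →ₗ[Λ] P₀) (hg : LinearMap.range g = LinearMap.ker p)
    (h1 : Subsingleton (ExtGrp Λ M Λ 1)) (h2 : Subsingleton (ExtGrp Λ M Λ 2)) :
    (∀ φ : ↥(LinearMap.ker p) →ₗ[Λ] Λ, ∃ η : P₀ →ₗ[Λ] Λ, ∀ x : LinearMap.ker p, η x = φ x) ∧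
    (∀ φ : ↥(LinearMap.ker g) →ₗ[Λ] Λ, ∃ η : P₁ →ₗ[Λ] Λ, ∀ x : LinearMap.ker g, η x = φ x) := by
  haveI : Projective (ModuleCat.of Λ P₀) := (IsProjective.iff_projective P₀).1 hP₀
  haveI : Projective (ModuleCat.of Λ P₁) := (IsProjective.iff_projective P₁).1 hP₁
  let gC : ModuleCat.of Λ P₁ ⟶ ModuleCat.of Λ P₀ := ModuleCat.ofHom g
  let pC : ModuleCat.of Λ P₀ ⟶ ModuleCat.of Λ M := ModuleCat.ofHom p
  haveI : Epi pC := (ModuleCat.epi_iff_surjective pC).2 hp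
  have hgp : gC ≫ pC = 0 := by
    ext x
    have : g x ∈ LinearMap.ker p := hg ▸ LinearMap.mem_range_self g x
    exact this
  have hex : (ShortComplex.mk gC pC hgp).Exact := by
    rw [ShortComplex.moduleCat_exact_iff]
    intro x hx
    have : x ∈ LinearMap.range g := hg.symm ▸ hx
    exact this
  let Q : ProjectiveResolution (ModuleCat.of Λ M) :=
    GPaux.resolution2 _ _ gC (ModuleCat.of Λ M) pC hgp hex
  have hd10 : Q.complex.d 1 0 = gC := GPaux.ofComplex2_d_1_0 _ _ _
  have hex1 : ∀ x : P₁, g x = 0 → ∃ y : Q.complex.X 2, Q.complex.d 2 1 y = x := by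
    have h := GPaux.ofComplex2_exactAt_succ (ModuleCat.of Λ P₀) (ModuleCat.of Λ P₁) gC 0
    rw [HomologicalComplex.exactAt_iff' _ 2 1 0 (by simp) (by simp)] at h
    rw [ShortComplex.moduleCat_exact_iff] at h
    intro x hx
    exact h x (by
      show (GPaux.ofComplex2 _ _ gC).d 1 0 x = 0
      rw [GPaux.ofComplex2_d_1_0]
      exact hx)
  have hd21g : ∀ y : Q.complex.X 2, g (Q.complex.d 2 1 y) = 0 := by
    intro y
    have h : Q.complex.d 2 1 ≫ Q.complex.d 1 0 = 0 := HomologicalComplex.d_comp_d _ _ _ _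
    rw [hd10] at h
    exact congrArg (fun (h' : Q.complex.X 2 ⟶ ModuleCat.of Λ P₀) => h' y) h
  constructor
  · intro φ
    have hmem : ∀ x : P₁, g x ∈ LinearMap.ker p := fun x =>
      hg ▸ LinearMap.mem_range_self g x
    let ψ : Q.complex.X 1 ⟶ ModuleCat.of Λ Λ :=
      ModuleCat.ofHom (φ.comp (g.codRestrict (LinearMap.ker p) hmem) : P₁ →ₗ[Λ] Λ)
    have hψ : Q.complex.d 2 1 ≫ ψ = 0 := by
      ext y
      show φ ⟨g (Q.complex.d 2 1 y), _⟩ = 0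
      have h : (⟨g (Q.complex.d 2 1 y), hmem _⟩ : LinearMap.ker p) = 0 :=
        Subtype.ext (hd21g y)
      rw [h, map_zero]
    obtain ⟨η, hη⟩ := res_exact Λ M Q 0 h1 ψ hψ
    rw [hd10] at hη
    refine ⟨η.hom, fun x => ?_⟩
    obtain ⟨y, hy⟩ : (x : P₀) ∈ LinearMap.range g := hg.symm ▸ x.2
    have happ : η (g y) = ψ y :=
      congrArg (fun (h' : ModuleCat.of Λ P₁ ⟶ ModuleCat.of Λ Λ) => h' y) hη
    have hval : ψ y = φ ⟨g y, hmem y⟩ := rfl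
    calc η (x : P₀) = η (g y) := by rw [hy]
    _ = φ ⟨g y, hmem y⟩ := by rw [happ, hval]
    _ = φ x := by congr 1; exact Subtype.ext hy
  · intro φ
    have hmem2 : ∀ y : Q.complex.X 2, Q.complex.d 2 1 y ∈ LinearMap.ker g := fun y =>
      (LinearMap.mem_ker (f := g)).2 (hd21g y)
    let ψ : Q.complex.X 2 ⟶ ModuleCat.of Λ Λ :=
      ModuleCat.ofHom (φ.comp (((Q.complex.d 2 1).hom : Q.complex.X 2 →ₗ[Λ] P₁).codRestrict
        (LinearMap.ker g) hmem2))
    have hψ : Q.complex.d 3 2 ≫ ψ = 0 := by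
      ext y
      show φ ⟨Q.complex.d 2 1 (Q.complex.d 3 2 y), _⟩ = 0
      have hz : Q.complex.d 2 1 (Q.complex.d 3 2 y) = 0 := by
        have h : Q.complex.d 3 2 ≫ Q.complex.d 2 1 = 0 := HomologicalComplex.d_comp_d _ _ _ _
        exact congrArg (fun (h' : Q.complex.X 3 ⟶ Q.complex.X 1) => h' y) h
      have h : (⟨Q.complex.d 2 1 (Q.complex.d 3 2 y), hmem2 _⟩ : LinearMap.ker g) = 0 :=
        Subtype.ext hz
      rw [h, map_zero]
    obtain ⟨η, hη⟩ := res_exact Λ M Q 1 h2 ψ hψ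
    refine ⟨η.hom, fun x => ?_⟩
    obtain ⟨y, hy⟩ := hex1 (x : P₁) (LinearMap.mem_ker.1 x.2)
    have happ : η (Q.complex.d 2 1 y) = ψ y :=
      congrArg (fun (h' : Q.complex.X 2 ⟶ ModuleCat.of Λ Λ) => h' y) hη
    have hval : ψ y = φ ⟨Q.complex.d 2 1 y, hmem2 y⟩ := rfl
    calc η (x : P₁) = η (Q.complex.d 2 1 y) := by rw [hy]
    _ = φ ⟨Q.complex.d 2 1 y, hmem2 y⟩ := by rw [happ, hval]
    _ = φ x := by congr 1; exact Subtype.ext hy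


lemma covers_equiv (Λ : Type) [Ring Λ] {P Q M : Type} [AddCommGroup P] [Module Λ P]
    [AddCommGroup Q] [Module Λ Q] [AddCommGroup M] [Module Λ M]
    (f : P →ₗ[Λ] M) (f' : Q →ₗ[Λ] M) (hf : IsProjCover Λ f) (hf' : IsProjCover Λ f') :
    ∃ h : P →ₗ[Λ] Q, f' ∘ₗ h = f ∧ Function.Bijective h := by
  obtain ⟨hP, hfs, hfsup⟩ := hf
  obtain ⟨hQ, hf's, hf'sup⟩ := hf'
  haveI := hP; haveI := hQ
  obtain ⟨h, hh⟩ := Module.projective_lifting_property f' f hf's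
  have hfh : ∀ x, f' (h x) = f x := fun x => LinearMap.congr_fun hh x
  have hsurj : Function.Surjective h := by
    rw [← LinearMap.range_eq_top]
    apply hf'sup
    rw [eq_top_iff]
    intro q _
    obtain ⟨x, hx⟩ := hfs (f' q)
    have h1 : h x ∈ LinearMap.range h := LinearMap.mem_range_self _ _
    have h2 : q - h x ∈ LinearMap.ker f' := by
      rw [LinearMap.mem_ker, map_sub, hfh, hx, sub_self]
    have := Submodule.add_mem_sup h1 h2
    rwa [add_sub_cancel] at this
  obtain ⟨s, hs⟩ := Module.projective_lifting_property h (LinearMap.id) hsurj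
  have hhs : ∀ y, h (s y) = y := fun y => LinearMap.congr_fun hs y
  have hssurj : Function.Surjective s := by
    rw [← LinearMap.range_eq_top]
    apply hfsup
    rw [eq_top_iff]
    intro p _
    have h1 : s (h p) ∈ LinearMap.range s := LinearMap.mem_range_self _ _
    have h2 : p - s (h p) ∈ LinearMap.ker f := by
      rw [LinearMap.mem_ker, map_sub, ← hfh (s (h p)), hhs, hfh, sub_self]
    have := Submodule.add_mem_sup h1 h2
    rwa [add_sub_cancel] at this
  have hinj : Function.Injective h := by
    intro a b hab
    obtain ⟨u, hu⟩ := hssurj a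
    obtain ⟨v, hv⟩ := hssurj b
    rw [← hu, ← hv]
    rw [← hu, ← hv, hhs, hhs] at hab
    rw [hab]
  exact ⟨h, hh, hinj, hsurj⟩

lemma covers_ker_equiv (Λ : Type) [Ring Λ] {P Q M : Type} [AddCommGroup P] [Module Λ P]
    [AddCommGroup Q] [Module Λ Q] [AddCommGroup M] [Module Λ M]
    (f : P →ₗ[Λ] M) (f' : Q →ₗ[Λ] M) (hf : IsProjCover Λ f) (hf' : IsProjCover Λ f') :
    Nonempty (↥(LinearMap.ker f) ≃ₗ[Λ] ↥(LinearMap.ker f')) := by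
  obtain ⟨h, hh, hbij⟩ := covers_equiv Λ f f' hf hf'
  have hfh : ∀ x, f' (h x) = f x := fun x => LinearMap.congr_fun hh x
  let e := LinearEquiv.ofBijective h hbij
  have hmap : (LinearMap.ker f).map (e : P →ₗ[Λ] Q) = LinearMap.ker f' := by
    ext y
    simp only [Submodule.mem_map, LinearMap.mem_ker]
    constructor
    · rintro ⟨x, hx, rfl⟩
      show f' (h x) = 0
      rw [hfh]; exact hx
    · intro hy
      obtain ⟨x, rfl⟩ := hbij.2 y
      exact ⟨x, by rw [← hfh]; exact hy, rfl⟩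
  exact ⟨(e.submoduleMap (LinearMap.ker f)).trans (LinearEquiv.ofEq _ _ hmap)⟩

end GPauxSec

/-- For a f.g. Gorenstein projective module `M`, the Auslander transpose `Tr M` is
isomorphic to `(Ω² M)^* = Hom_Λ(Ω² M, Λ)`. -/
theorem transpose_iso_dual_secondSyzygy (Λ : Type) [Ring Λ] [IsArtinianRing Λ]
    (M : Type) [AddCommGroup M] [Module Λ M] (hfg : Module.Finite Λ M) (hGP : GProj Λ M)
    (T : Type) [AddCommGroup T] [Module Λᵐᵒᵖ T] (hT : IsTransposeOf Λ T M)
    (K : Type) [AddCommGroup K] [Module Λ K] (hK : IsNthSyzygyOf Λ 2 K M) :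
    Nonempty (T ≃ₗ[Λᵐᵒᵖ] (K →ₗ[Λ] Λ)) := by
  obtain ⟨P₁, P₀, _, _, _, _, g, f, hfcov, hP₁, hrange, hgsup, ⟨eT⟩⟩ := hT
  obtain ⟨K₁, _, _, hsyz1, hK1⟩ := hK
  obtain ⟨K₂, _, _, hsyz2, ⟨eK2⟩⟩ := hK1
  obtain ⟨Q₀, _, _, f₀, hf₀cov, ⟨e₁⟩⟩ := hsyz1
  obtain ⟨Q₁, _, _, f₁, hf₁cov, ⟨e₂⟩⟩ := hsyz2
  obtain ⟨e₀⟩ := covers_ker_equiv Λ f f₀ hfcov hf₀cov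
  let c : (↥(LinearMap.ker f)) ≃ₗ[Λ] K₁ := e₀.trans e₁.symm
  have hmemf : ∀ x : P₁, g x ∈ LinearMap.ker f := fun x =>
    hrange ▸ LinearMap.mem_range_self g x
  let g' : P₁ →ₗ[Λ] ↥(LinearMap.ker f) := g.codRestrict _ hmemf
  have hg'surj : Function.Surjective g' := by
    intro y
    obtain ⟨x, hx⟩ : (y : P₀) ∈ LinearMap.range g := hrange.symm ▸ y.2
    exact ⟨x, Subtype.ext hx⟩
  have hkerg' : LinearMap.ker g' = LinearMap.ker g := LinearMap.ker_codRestrict _ _ _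
  let g'' : P₁ →ₗ[Λ] K₁ := (c : ↥(LinearMap.ker f) →ₗ[Λ] K₁) ∘ₗ g'
  have hkerg'' : LinearMap.ker g'' = LinearMap.ker g := by
    rw [LinearMap.ker_comp, LinearEquiv.ker, Submodule.comap_bot, hkerg']
  have hg''cov : IsProjCover Λ g'' := by
    refine ⟨hP₁, c.surjective.comp hg'surj, ?_⟩
    intro N hN
    apply hgsup
    rwa [← hkerg'']
  obtain ⟨e₃⟩ := covers_ker_equiv Λ f₁ g'' hf₁cov hg''cov
  let eKg : K ≃ₗ[Λ] ↥(LinearMap.ker g) :=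
    eK2.trans (e₂.trans (e₃.trans (LinearEquiv.ofEq _ _ hkerg'')))
  have h1 : Subsingleton (ExtGrp Λ M Λ 1) := hGP.1 1 le_rfl
  have h2 : Subsingleton (ExtGrp Λ M Λ 2) := hGP.1 2 (by norm_num)
  obtain ⟨ext1, ext2⟩ := extend_ker Λ M P₀ P₁ hfcov.1 hP₁ f hfcov.2.1 g hrange h1 h2
  let res : ((P₁ →ₗ[Λ] Λ)) →ₗ[Λᵐᵒᵖ] (↥(LinearMap.ker g) →ₗ[Λ] Λ) :=
    dualMapOp Λ (LinearMap.ker g).subtype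
  have hressurj : Function.Surjective res := by
    intro φ
    obtain ⟨η, hη⟩ := ext2 φ
    exact ⟨η, LinearMap.ext fun x => hη x⟩
  have hkerres : LinearMap.ker res = LinearMap.range (dualMapOp Λ g) := by
    ext ψ
    simp only [LinearMap.mem_ker, LinearMap.mem_range]
    constructor
    · intro hψ
      have hvan : ∀ x ∈ LinearMap.ker g, ψ x = 0 := fun x hx =>
        LinearMap.congr_fun hψ ⟨x, hx⟩
      have hle : LinearMap.ker g' ≤ LinearMap.ker ψ := by
        rw [hkerg']
        intro x hx
        exact hvan x hx
      let q := (LinearMap.ker g').liftQ ψ hle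
      let eq' := g'.quotKerEquivOfSurjective hg'surj
      let φ' : ↥(LinearMap.ker f) →ₗ[Λ] Λ := q ∘ₗ (eq'.symm : _ →ₗ[Λ] _)
      have hφ' : ∀ x : P₁, φ' (g' x) = ψ x := by
        intro x
        have hq : eq'.symm (g' x) = Submodule.Quotient.mk x := by
          apply eq'.injective
          rw [LinearEquiv.apply_symm_apply]
          simp [eq', LinearMap.quotKerEquivOfSurjective]
        show q (eq'.symm (g' x)) = ψ x
        rw [hq]
        rfl
      obtain ⟨η, hη⟩ := ext1 φ'
      refine ⟨η, ?_⟩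
      ext x
      show η (g x) = ψ x
      have hx : η (g x) = φ' (g' x) := hη (g' x)
      rw [hx, hφ' x]
    · rintro ⟨η, rfl⟩
      ext x
      show η (g (x : P₁)) = 0
      have hx : g (x : P₁) = 0 := x.2
      rw [hx, map_zero]
  let E : ((P₁ →ₗ[Λ] Λ) ⧸ LinearMap.range (dualMapOp Λ g)) ≃ₗ[Λᵐᵒᵖ]
      (↥(LinearMap.ker g) →ₗ[Λ] Λ) :=
    (Submodule.quotEquivOfEq _ _ hkerres.symm).trans
      (res.quotKerEquivOfSurjective hressurj)
  let D : (↥(LinearMap.ker g) →ₗ[Λ] Λ) ≃ₗ[Λᵐᵒᵖ] (K →ₗ[Λ] Λ) :=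
    LinearEquiv.ofLinear (dualMapOp Λ (eKg : K →ₗ[Λ] ↥(LinearMap.ker g)))
      (dualMapOp Λ (eKg.symm : ↥(LinearMap.ker g) →ₗ[Λ] K))
      (LinearMap.ext fun φ => LinearMap.ext fun x => by
        show φ (eKg.symm (eKg x)) = φ x
        rw [eKg.symm_apply_apply])
      (LinearMap.ext fun φ => LinearMap.ext fun x => by
        show φ (eKg (eKg.symm x)) = φ x
        rw [eKg.apply_symm_apply])
  exact ⟨eT.trans (E.trans D)⟩

end
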